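/- Let r ≥ 1, δ ≥ 0, 0 < γ < n/r, r < p < n/γ, 1/q = 1/p − γ/n and 1/r' = 1 − 1/r. Set σ = nr/(n−rγ), ν = nδ/(n−rγ), β = (q/σ)(1/p + 1/r'), and define ξ(z) = z^{q/β} for 0 ≤ z ≤ 1 and ξ(z) = z^σ(1+log⁺z)^ν for z > 1, and φ(z) = z^{q/p+q/r'}(1+log⁺z)^ν. Then there is a constant C > 0 (depending only on n, r, δ, γ, p) such that for every weight v and every x ∈ ℝ^n, (M_ξ(v^β)(x))^{1/β} ≤ C·M_φ v(x). -/

import Mathlib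

open MeasureTheory Real Filter

noncomputable section

/-- A cube in `ℝⁿ` with sides parallel to the coordinate axes. -/
structure Cube (n : ℕ) where
  corner : Fin n → ℝ
  side : ℝ
  side_pos : 0 < side

namespace Cube

variable {n : ℕ}

/-- The set of points of the cube. -/
def toSet (Q : Cube n) : Set (Fin n → ℝ) :=
  {x | ∀ i, Q.corner i ≤ x i ∧ x i ≤ Q.corner i + Q.side}

/-- The Lebesgue measure `|Q|` of the cube. -/
def vol (Q : Cube n) : ℝ := Q.side ^ n

end Cube

variable {n : ℕ}

/-- Average `(1/|Q|)∫_Q f` of `f` over the cube `Q`. -/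
def cubeAvg (Q : Cube n) (f : (Fin n → ℝ) → ℝ) : ℝ :=
  (Q.vol)⁻¹ * ∫ x in Q.toSet, f x

/-- Luxemburg average `‖f‖_{Φ,Q}`. -/
def luxAvg (Φ : ℝ → ℝ) (Q : Cube n) (f : (Fin n → ℝ) → ℝ) : ℝ :=
  sInf {lam : ℝ | 0 < lam ∧ (Q.vol)⁻¹ * ∫ x in Q.toSet, Φ (|f x| / lam) ≤ 1}

/-- Generalized maximal operator `M_Φ`. -/
def maximalOp (Φ : ℝ → ℝ) (f : (Fin n → ℝ) → ℝ) (x : Fin n → ℝ) : ℝ :=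
  sSup {r : ℝ | ∃ Q : Cube n, x ∈ Q.toSet ∧ r = luxAvg Φ Q f}

/-- Generalized fractional maximal operator `M_{γ,Φ}`. -/
def fracMaximalOp (γ : ℝ) (Φ : ℝ → ℝ) (f : (Fin n → ℝ) → ℝ) (x : Fin n → ℝ) : ℝ :=
  sSup {r : ℝ | ∃ Q : Cube n, x ∈ Q.toSet ∧ r = Q.vol ^ (γ / (n : ℝ)) * luxAvg Φ Q f}

/-- Weighted Luxemburg norm `‖g‖_{θ,Q,w}` with respect to the measure `w dx`. -/
def luxNormW (θ : ℝ → ℝ) (Q : Cube n) (w g : (Fin n → ℝ) → ℝ) : ℝ :=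
  sInf {lam : ℝ | 0 < lam ∧
    (∫ x in Q.toSet, w x)⁻¹ * ∫ x in Q.toSet, θ (|g x| / lam) * w x ≤ 1}

/-- A weight: a nonnegative locally integrable function on `ℝⁿ`. -/
def IsWeight (w : (Fin n → ℝ) → ℝ) : Prop :=
  (∀ x, 0 ≤ w x) ∧ LocallyIntegrable w volume

/-- A Young function: convex, increasing, `Φ(0)=0`, `Φ(t)→∞`. -/
def IsYoung (Φ : ℝ → ℝ) : Prop :=
  ConvexOn ℝ (Set.Ici 0) Φ ∧ MonotoneOn Φ (Set.Ici 0) ∧ Φ 0 = 0 ∧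
    Tendsto Φ atTop atTop

/-- `Φ ∈ 𝔉_{r,δ}`: a submultiplicative Young function of lower type `r`
satisfying `Φ(t)/t^r ≤ C₀ (log t)^δ` for `t ≥ t*`. -/
def MemF (r δ : ℝ) (Φ : ℝ → ℝ) : Prop :=
  IsYoung Φ ∧
  (∀ s t : ℝ, 0 ≤ s → 0 ≤ t → Φ (s * t) ≤ Φ s * Φ t) ∧
  (∃ C > 0, ∀ s t : ℝ, 0 < s → s ≤ 1 → 0 < t → Φ (s * t) ≤ C * s ^ r * Φ t) ∧
  (∃ C₀ > 0, ∃ tstar ≥ (1 : ℝ), ∀ t ≥ tstar, Φ t / t ^ r ≤ C₀ * Real.log t ^ δ)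

/-- The Muckenhoupt `A₁` condition. -/
def MemA1 (u : (Fin n → ℝ) → ℝ) : Prop :=
  ∃ C > 0, ∀ Q : Cube n, cubeAvg Q u ≤ C * essInf u (volume.restrict Q.toSet)

/-- The `A_∞` quantity of `w` on a cube `Q`. -/
def ainfQ (w : (Fin n → ℝ) → ℝ) (Q : Cube n) : ℝ :=
  cubeAvg Q w * Real.exp (cubeAvg Q fun x => Real.log (w x)⁻¹)

/-- `w ∈ A_∞`. -/
def MemAinf (w : (Fin n → ℝ) → ℝ) : Prop :=
  BddAbove (Set.range (ainfQ w))

/-- The `A_∞` constant `[w]_{A_∞}`. -/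
def ainfConst (w : (Fin n → ℝ) → ℝ) : ℝ :=
  ⨆ Q : Cube n, ainfQ w Q

/-- The `A_q` quantity of `w` on a cube `Q`. -/
def aqQ (q : ℝ) (w : (Fin n → ℝ) → ℝ) (Q : Cube n) : ℝ :=
  cubeAvg Q w * (cubeAvg Q fun x => w x ^ (1 / (1 - q))) ^ (q - 1)

/-- `w ∈ A_q`. -/
def MemAq (q : ℝ) (w : (Fin n → ℝ) → ℝ) : Prop :=
  BddAbove (Set.range (aqQ q w))

/-- The `A_q` constant `[w]_{A_q}`. -/
def aqConst (q : ℝ) (w : (Fin n → ℝ) → ℝ) : ℝ :=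
  ⨆ Q : Cube n, aqQ q w Q

/-- The reverse Hölder `RH_s` quantity of `w` on a cube `Q`. -/
def rhQ (s : ℝ) (w : (Fin n → ℝ) → ℝ) (Q : Cube n) : ℝ :=
  (cubeAvg Q fun x => w x ^ s) ^ (1 / s) / cubeAvg Q w

/-- `w ∈ RH_s`. -/
def MemRH (s : ℝ) (w : (Fin n → ℝ) → ℝ) : Prop :=
  BddAbove (Set.range (rhQ s w))

/-- The reverse Hölder constant `[w]_{RH_s}`. -/
def rhConst (s : ℝ) (w : (Fin n → ℝ) → ℝ) : ℝ :=
  ⨆ Q : Cube n, rhQ s w Q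

/-- `log⁺ z = max(log z, 0)`. -/
def logPlus (z : ℝ) : ℝ := max (Real.log z) 0

/-- `η_ε(z) = z (1 + log⁺ z)^{δ/ε}`. -/
def eta (δ ε z : ℝ) : ℝ := z * (1 + logPlus z) ^ (δ / ε)

namespace MyAux

lemma logPlus_nonneg (t : ℝ) : 0 ≤ logPlus t := le_max_right _ _

lemma one_le_base (t : ℝ) : 1 ≤ 1 + logPlus t := by have := logPlus_nonneg t; linarith

lemma logPlus_of_le_one {t : ℝ} (ht : 0 ≤ t) (h : t ≤ 1) : logPlus t = 0 :=
  max_eq_right (Real.log_nonpos ht h)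

lemma logPlus_of_one_lt {t : ℝ} (h : 1 < t) : logPlus t = Real.log t :=
  max_eq_left (Real.log_nonneg h.le)

/-- normalized xi -/
def xiN (q a β ν : ℝ) (t : ℝ) : ℝ :=
  if t ≤ 1 then t ^ q else t ^ a * (1 + β * Real.log t) ^ ν

/-- normalized phi -/
def phiN (a ν : ℝ) (t : ℝ) : ℝ := t ^ a * (1 + logPlus t) ^ ν

lemma phiN_nonneg {a ν t : ℝ} (ht : 0 ≤ t) : 0 ≤ phiN a ν t :=
  mul_nonneg (Real.rpow_nonneg ht _) (Real.rpow_nonneg (by have := logPlus_nonneg t; linarith) _)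

lemma xiN_nonneg {q a β ν t : ℝ} (hb : 0 ≤ β) (ht : 0 ≤ t) : 0 ≤ xiN q a β ν t := by
  unfold xiN
  split
  · exact Real.rpow_nonneg ht _
  · rename_i h
    push_neg at h
    have hlog : 0 ≤ Real.log t := Real.log_nonneg h.le
    exact mul_nonneg (Real.rpow_nonneg ht _)
      (Real.rpow_nonneg (by nlinarith) _)

/-- `ξ(t^β)` in normalized form. -/
lemma xi_comp {q σ ν β : ℝ} (hb : 0 < β) (t : ℝ) (ht : 0 ≤ t) :
    (if t ^ β ≤ 1 then (t ^ β) ^ (q / β) else (t ^ β) ^ σ * (1 + logPlus (t ^ β)) ^ ν)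
      = xiN q (β * σ) β ν t := by
  unfold xiN
  rcases le_or_gt t 1 with h1 | h1
  · rw [if_pos (Real.rpow_le_one ht h1 hb.le), if_pos h1, ← Real.rpow_mul ht]
    congr 1
    field_simp
  · have h2 : 1 < t ^ β := by
      rw [Real.one_lt_rpow_iff_of_pos (lt_of_le_of_lt zero_le_one h1)]
      exact Or.inl ⟨h1, hb⟩
    rw [if_neg (not_le.mpr h2), if_neg (not_le.mpr h1), ← Real.rpow_mul ht,
      logPlus_of_one_lt h2, Real.log_rpow (lt_of_le_of_lt zero_le_one h1)]

end MyAux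

namespace MyAux2
open MyAux

variable {q a β ν K : ℝ}

lemma log_bound_up (hb : 0 < β) (hν : 0 ≤ ν) {u w : ℝ} (hu : 1 < u) (huw : u ≤ w) :
    (1 + β * Real.log u) ^ ν ≤ (max β 1) ^ ν * (1 + Real.log w) ^ ν := by
  have hlu : 0 < Real.log u := Real.log_pos hu
  have hlw : Real.log u ≤ Real.log w := Real.log_le_log (by linarith) huw
  have hM1 : 1 ≤ max β 1 := le_max_right _ _
  have hMβ : β ≤ max β 1 := le_max_left _ _
  have h1 : 1 + β * Real.log u ≤ max β 1 * (1 + Real.log w) := by nlinarith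
  calc (1 + β * Real.log u) ^ ν ≤ (max β 1 * (1 + Real.log w)) ^ ν :=
        Real.rpow_le_rpow (by nlinarith) h1 hν
    _ = (max β 1) ^ ν * (1 + Real.log w) ^ ν :=
        Real.mul_rpow (by linarith) (by nlinarith)

lemma log_bound_down (hb : 0 < β) (hν : 0 ≤ ν) {u w : ℝ} (hu : 1 < u) (huw : u ≤ w) :
    (1 + Real.log u) ^ ν ≤ ((min β 1) ^ ν)⁻¹ * (1 + β * Real.log w) ^ ν := by
  have hlu : 0 < Real.log u := Real.log_pos hu
  have hlw : Real.log u ≤ Real.log w := Real.log_le_log (by linarith) huw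
  have hm0 : 0 < min β 1 := lt_min hb one_pos
  have hm1 : min β 1 ≤ 1 := min_le_right _ _
  have hmβ : min β 1 ≤ β := min_le_left _ _
  have h1 : 1 + Real.log u ≤ (min β 1)⁻¹ * (1 + β * Real.log w) := by
    rw [le_inv_mul_iff₀ hm0]; nlinarith
  calc (1 + Real.log u) ^ ν ≤ ((min β 1)⁻¹ * (1 + β * Real.log w)) ^ ν :=
        Real.rpow_le_rpow (by nlinarith) h1 hν
    _ = ((min β 1) ^ ν)⁻¹ * (1 + β * Real.log w) ^ ν := by
        rw [Real.mul_rpow (by positivity) (by nlinarith), ← Real.inv_rpow hm0.le]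

lemma ineqA (hq : 0 < q) (ha : 0 < a) (haq : a ≤ q) (hb : 0 < β) (hν : 0 ≤ ν)
    (hK1 : 1 ≤ K) (hKM : (max β 1) ^ ν ≤ K ^ a)
    (t : ℝ) (ht : 0 ≤ t) : xiN q a β ν (t / K) ≤ phiN a ν t := by
  have hK0 : 0 < K := lt_of_lt_of_le one_pos hK1
  have hu0 : 0 ≤ t / K := div_nonneg ht hK0.le
  have hut : t / K ≤ t := div_le_self ht hK1
  have hbase : 1 ≤ (1 + logPlus t) ^ ν :=
    Real.one_le_rpow (one_le_base t) hν
  rcases le_or_gt (t / K) 1 with h1 | h1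
  · rw [xiN, if_pos h1]
    calc (t / K) ^ q ≤ (t / K) ^ a :=
          Real.rpow_le_rpow_of_exponent_ge' hu0 h1 ha.le haq
      _ ≤ t ^ a := Real.rpow_le_rpow hu0 hut ha.le
      _ ≤ phiN a ν t := le_mul_of_one_le_right (Real.rpow_nonneg ht _) hbase
  · have ht1 : 1 < t := lt_of_lt_of_le h1 hut
    rw [xiN, if_neg (not_le.mpr h1), phiN, logPlus_of_one_lt ht1]
    have hlog := log_bound_up (β := β) hb hν h1 hut
    have h2 : (t / K) ^ a * (1 + β * Real.log (t / K)) ^ ν ≤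
        (t / K) ^ a * (K ^ a * (1 + Real.log t) ^ ν) := by
      apply mul_le_mul_of_nonneg_left _ (Real.rpow_nonneg hu0 _)
      exact hlog.trans (mul_le_mul_of_nonneg_right hKM (Real.rpow_nonneg
        (by nlinarith [Real.log_nonneg ht1.le]) _))
    refine h2.trans (le_of_eq ?_)
    rw [Real.div_rpow ht hK0.le]
    field_simp

lemma ineqB2 (hq : 0 < q) (ha : 0 < a) (haq : a ≤ q) (hb : 0 < β) (hν : 0 ≤ ν)
    (hK1 : 1 ≤ K) (hK2 : 2 ≤ K ^ a * (min β 1) ^ ν)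
    (t : ℝ) (ht : 0 ≤ t) : phiN a ν t ≤ xiN q a β ν (K * t) + 1 := by
  have hK0 : 0 < K := lt_of_lt_of_le one_pos hK1
  have hm0 : 0 < min β 1 := lt_min hb one_pos
  have hmν : 0 < (min β 1) ^ ν := Real.rpow_pos_of_pos hm0 _
  rcases le_or_gt t 1 with h1 | h1
  · rw [phiN, logPlus_of_le_one ht h1, add_zero, Real.one_rpow, mul_one]
    have : t ^ a ≤ 1 := Real.rpow_le_one ht h1 ha.le
    have := xiN_nonneg (q := q) (a := a) (ν := ν) hb.le (mul_nonneg hK0.le ht)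
    linarith
  · have hKt : 1 < K * t := lt_of_lt_of_le h1 (le_mul_of_one_le_left (by linarith) hK1)
    rw [phiN, logPlus_of_one_lt h1, xiN, if_neg (not_le.mpr hKt)]
    have htKt : t ≤ K * t := le_mul_of_one_le_left (by linarith) hK1
    have hlog := log_bound_down (β := β) hb hν h1 htKt
    have hfac : ((min β 1) ^ ν)⁻¹ ≤ K ^ a := by
      rw [inv_le_iff_one_le_mul₀ hmν]
      nlinarith
    have h2 : (1 + Real.log t) ^ ν ≤ K ^ a * (1 + β * Real.log (K * t)) ^ ν := by
      refine hlog.trans (mul_le_mul_of_nonneg_right hfac (Real.rpow_nonneg ?_ _))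
      nlinarith [Real.log_nonneg hKt.le]
    have h3 : t ^ a * (1 + Real.log t) ^ ν ≤ t ^ a * (K ^ a * (1 + β * Real.log (K * t)) ^ ν) :=
      mul_le_mul_of_nonneg_left h2 (Real.rpow_nonneg ht _)
    have h4 : t ^ a * (K ^ a * (1 + β * Real.log (K * t)) ^ ν)
        = (K * t) ^ a * (1 + β * Real.log (K * t)) ^ ν := by
      rw [Real.mul_rpow hK0.le ht]; ring
    have h5 := (h3.trans_eq h4)
    linarith

lemma ineqC (hq : 0 < q) (ha : 0 < a) (haq : a ≤ q) (hb : 0 < β) (hν : 0 ≤ ν)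
    (hK1 : 1 ≤ K) (hK2 : 2 ≤ K ^ a * (min β 1) ^ ν)
    (t : ℝ) (ht : 0 ≤ t) : phiN a ν (t / K) ≤ (xiN q a β ν t + 1) / 2 := by
  have hK0 : 0 < K := lt_of_lt_of_le one_pos hK1
  have hm0 : 0 < min β 1 := lt_min hb one_pos
  have hmν0 : 0 < (min β 1) ^ ν := Real.rpow_pos_of_pos hm0 _
  have hmν1 : (min β 1) ^ ν ≤ 1 := Real.rpow_le_one hm0.le (min_le_right _ _) hν
  have hKa0 : 0 < K ^ a := Real.rpow_pos_of_pos hK0 _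
  have hKa2 : 2 ≤ K ^ a := by nlinarith
  have hu0 : 0 ≤ t / K := div_nonneg ht hK0.le
  have hut : t / K ≤ t := div_le_self ht hK1
  have hxi0 := xiN_nonneg (q := q) (a := a) (ν := ν) hb.le ht
  have hR1 : 1 ≤ (1 + β * Real.log t) ^ ν ∨ t ≤ 1 := by
    rcases le_or_gt t 1 with h | h
    · exact Or.inr h
    · exact Or.inl (Real.one_le_rpow (by nlinarith [Real.log_nonneg h.le]) hν)
  rcases le_or_gt t 1 with h1 | h1
  · have hu1 : t / K ≤ 1 := hut.trans h1
    rw [phiN, logPlus_of_le_one hu0 hu1, add_zero, Real.one_rpow, mul_one,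
      Real.div_rpow ht hK0.le]
    have hta1 : t ^ a ≤ 1 := Real.rpow_le_one ht h1 ha.le
    have h5 : t ^ a / K ^ a ≤ 1 / 2 := by
      rw [div_le_div_iff₀ hKa0 two_pos]; nlinarith
    linarith
  · have hR : 1 ≤ (1 + β * Real.log t) ^ ν :=
      Real.one_le_rpow (by nlinarith [Real.log_nonneg h1.le]) hν
    have hR0 : 0 ≤ (1 + β * Real.log t) ^ ν := by linarith
    have hta0 : 0 ≤ t ^ a := Real.rpow_nonneg ht _
    rw [xiN, if_neg (not_le.mpr h1)]
    rcases le_or_gt (t / K) 1 with hu1 | hu1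
    · rw [phiN, logPlus_of_le_one hu0 hu1, add_zero, Real.one_rpow, mul_one,
        Real.div_rpow ht hK0.le]
      have h5 : t ^ a / K ^ a ≤ t ^ a / 2 := by
        rw [div_le_div_iff₀ hKa0 two_pos]; nlinarith
      have h6 : t ^ a ≤ t ^ a * (1 + β * Real.log t) ^ ν :=
        le_mul_of_one_le_right hta0 hR
      have h7 : t ^ a / 2 ≤ (t ^ a * (1 + β * Real.log t) ^ ν + 1) / 2 := by linarith
      linarith
    · rw [phiN, logPlus_of_one_lt hu1]
      have hlog := log_bound_down (β := β) hb hν hu1 hut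
      have hhalf : (K ^ a)⁻¹ * ((min β 1) ^ ν)⁻¹ ≤ 1 / 2 := by
        rw [← mul_inv]
        rw [inv_le_iff_one_le_mul₀ (by positivity)]
        nlinarith
      calc (t / K) ^ a * (1 + Real.log (t / K)) ^ ν
          ≤ (t / K) ^ a * (((min β 1) ^ ν)⁻¹ * (1 + β * Real.log t) ^ ν) :=
            mul_le_mul_of_nonneg_left hlog (Real.rpow_nonneg hu0 _)
        _ = (t ^ a * (1 + β * Real.log t) ^ ν) * ((K ^ a)⁻¹ * ((min β 1) ^ ν)⁻¹) := by
            rw [Real.div_rpow ht hK0.le, div_eq_mul_inv]; ring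
        _ ≤ (t ^ a * (1 + β * Real.log t) ^ ν) * (1 / 2) :=
            mul_le_mul_of_nonneg_left hhalf (by positivity)
        _ ≤ (t ^ a * (1 + β * Real.log t) ^ ν + 1) / 2 := by linarith

end MyAux2

namespace MyAux3
open MyAux MyAux2
variable {n : ℕ}

lemma cube_vol_pos (Q : Cube n) : 0 < Q.vol := pow_pos Q.side_pos n

lemma cube_volume (Q : Cube n) : volume Q.toSet = ENNReal.ofReal Q.vol := by
  have h : Q.toSet = Set.Icc Q.corner (fun i => Q.corner i + Q.side) := by
    ext x
    simp [Cube.toSet, Set.mem_Icc, Pi.le_def, forall_and]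
  rw [h, Real.volume_Icc_pi]
  simp only [add_sub_cancel_left]
  rw [Finset.prod_const, Finset.card_univ, Fintype.card_fin,
    ← ENNReal.ofReal_pow Q.side_pos.le]
  rfl

lemma cube_finite (Q : Cube n) : IsFiniteMeasure (volume.restrict Q.toSet) := by
  constructor
  rw [Measure.restrict_apply_univ, cube_volume]
  exact ENNReal.ofReal_lt_top

lemma avg_le_one_iff (Q : Cube n) (I : ℝ) : Q.vol⁻¹ * I ≤ 1 ↔ I ≤ Q.vol := by
  rw [inv_mul_le_iff₀ (cube_vol_pos Q), mul_one]

lemma int_le' (Q : Cube n) {F G : (Fin n → ℝ) → ℝ} (hF0 : ∀ y, 0 ≤ F y)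
    (hle : ∀ y, F y ≤ G y) (hGint : Integrable G (volume.restrict Q.toSet))
    (hG : Q.vol⁻¹ * ∫ y in Q.toSet, G y ≤ 1) :
    Q.vol⁻¹ * ∫ y in Q.toSet, F y ≤ 1 := by
  rw [avg_le_one_iff] at hG ⊢
  refine le_trans (integral_mono_of_nonneg (Filter.Eventually.of_forall hF0) hGint
    (Filter.Eventually.of_forall hle)) hG

lemma int_le (Q : Cube n) {F G : (Fin n → ℝ) → ℝ} (hF0 : ∀ y, 0 ≤ F y)
    (hle : ∀ y, F y ≤ (G y + 1) / 2) (hGint : Integrable G (volume.restrict Q.toSet))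
    (hG : Q.vol⁻¹ * ∫ y in Q.toSet, G y ≤ 1) :
    Q.vol⁻¹ * ∫ y in Q.toSet, F y ≤ 1 := by
  haveI := cube_finite Q
  rw [avg_le_one_iff] at hG ⊢
  have hint2 : Integrable (fun y => (G y + 1) / 2) (volume.restrict Q.toSet) :=
    ((hGint.add (integrable_const 1)).div_const 2)
  refine le_trans (integral_mono_of_nonneg (Filter.Eventually.of_forall hF0) hint2
    (Filter.Eventually.of_forall hle)) ?_
  have : ∫ y in Q.toSet, (G y + 1) / 2 =
      ((∫ y in Q.toSet, G y) + Q.vol) / 2 := by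
    rw [integral_div, integral_add hGint (integrable_const 1), integral_const,
      measureReal_def, Measure.restrict_apply_univ, cube_volume, smul_eq_mul, mul_one,
      ENNReal.toReal_ofReal (cube_vol_pos Q).le]
  rw [this]
  linarith

lemma int_of_nonint (Q : Cube n) {F G : (Fin n → ℝ) → ℝ}
    (hFmeas : AEStronglyMeasurable F (volume.restrict Q.toSet)) (hF0 : ∀ y, 0 ≤ F y)
    (hle : ∀ y, F y ≤ G y + 1) (hFnon : ¬ Integrable F (volume.restrict Q.toSet)) :
    Q.vol⁻¹ * ∫ y in Q.toSet, G y ≤ 1 := by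
  haveI := cube_finite Q
  have hGnon : ¬ Integrable G (volume.restrict Q.toSet) := by
    intro hG
    exact hFnon (Integrable.mono' (hG.add (integrable_const 1)) hFmeas
      (Filter.Eventually.of_forall fun y => by
        rw [Real.norm_eq_abs, abs_of_nonneg (hF0 y)]; exact hle y))
  rw [integral_undef hGnon, mul_zero]
  exact zero_le_one

lemma measurable_xiN (q a β ν : ℝ) : Measurable (xiN q a β ν) := by
  unfold xiN
  apply Measurable.ite (measurableSet_le measurable_id measurable_const)
  · exact measurable_id.pow_const _
  · exact (measurable_id.pow_const _).mul
      ((measurable_const.add (Real.measurable_log.const_mul β)).pow_const _)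

lemma measurable_phiN (a ν : ℝ) : Measurable (phiN a ν) := by
  unfold phiN logPlus
  exact (measurable_id.pow_const _).mul
    ((measurable_const.add (Real.measurable_log.max measurable_const)).pow_const _)

end MyAux3

namespace MyAux4
open MyAux MyAux2 MyAux3

lemma cube_est (q σ ν β K : ℝ)
    (hq : 0 < q) (ha : 0 < β * σ) (haq : β * σ ≤ q) (hb : 0 < β) (hν : 0 ≤ ν)
    (hK1 : 1 ≤ K) (hKM : (max β 1) ^ ν ≤ K ^ (β * σ))
    (hK2 : 2 ≤ K ^ (β * σ) * (min β 1) ^ ν)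
    (Q : Cube n) (v : (Fin n → ℝ) → ℝ) (hv : IsWeight v) :
    (luxAvg (fun z => if z ≤ 1 then z ^ (q / β) else z ^ σ * (1 + logPlus z) ^ ν) Q
        (fun y => v y ^ β)) ^ (1 / β) ≤
      K * luxAvg (fun z => z ^ (β * σ) * (1 + logPlus z) ^ ν) Q v ∧
    luxAvg (fun z => z ^ (β * σ) * (1 + logPlus z) ^ ν) Q v ≤
      K * (luxAvg (fun z => if z ≤ 1 then z ^ (q / β) else z ^ σ * (1 + logPlus z) ^ ν) Q
        (fun y => v y ^ β)) ^ (1 / β) := by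
  have hK0 : 0 < K := lt_of_lt_of_le one_pos hK1
  have hv0 : ∀ y, 0 ≤ v y := hv.1
  have hmv : AEMeasurable v (volume.restrict Q.toSet) :=
    hv.2.aestronglyMeasurable.aemeasurable.restrict
  set a := β * σ with ha_def
  set ξf : ℝ → ℝ := fun z => if z ≤ 1 then z ^ (q / β) else z ^ σ * (1 + logPlus z) ^ ν
    with hξf
  set φf : ℝ → ℝ := fun z => z ^ a * (1 + logPlus z) ^ ν with hφf
  set S1 : Set ℝ :=
    {lam : ℝ | 0 < lam ∧ (Q.vol)⁻¹ * ∫ x in Q.toSet, ξf (|v x ^ β| / lam) ≤ 1} with hS1def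
  set S2 : Set ℝ :=
    {lam : ℝ | 0 < lam ∧ (Q.vol)⁻¹ * ∫ x in Q.toSet, φf (|v x| / lam) ≤ 1} with hS2def
  have hL1 : luxAvg ξf Q (fun y => v y ^ β) = sInf S1 := rfl
  have hL2 : luxAvg φf Q v = sInf S2 := rfl
  -- pointwise rewriting of integrands
  have hξeq : ∀ c : ℝ, 0 < c → ∀ y, ξf (|v y ^ β| / c ^ β) = xiN q a β ν (v y / c) := by
    intro c hc y
    rw [hξf, abs_of_nonneg (Real.rpow_nonneg (hv0 y) β), ← Real.div_rpow (hv0 y) hc.le]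
    exact xi_comp hb _ (div_nonneg (hv0 y) hc.le)
  have hφeq : ∀ (c : ℝ) (y), φf (|v y| / c) = phiN a ν (v y / c) := by
    intro c y
    rw [hφf, abs_of_nonneg (hv0 y)]
    rfl
  have bddS1 : BddBelow S1 := ⟨0, fun y hy => hy.1.le⟩
  have bddS2 : BddBelow S2 := ⟨0, fun y hy => hy.1.le⟩
  have hSi1 : 0 ≤ sInf S1 := Real.sInf_nonneg fun y hy => hy.1.le
  have hSi2 : 0 ≤ sInf S2 := Real.sInf_nonneg fun y hy => hy.1.le
  -- forward transfer
  have hFwd : ∀ lam ∈ S2, ∃ mu ∈ S1, mu ≤ (lam * K) ^ β := by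
    rintro lam ⟨hlam0, hlam⟩
    rw [integral_congr_ae (Filter.Eventually.of_forall fun y => hφeq lam y)] at hlam
    by_cases hI : Integrable (fun y => phiN a ν (v y / lam)) (volume.restrict Q.toSet)
    · refine ⟨(lam * K) ^ β, ⟨Real.rpow_pos_of_pos (by positivity) _, ?_⟩, le_rfl⟩
      rw [integral_congr_ae (Filter.Eventually.of_forall fun y =>
        hξeq (lam * K) (by positivity) y)]
      refine int_le' Q (fun y => xiN_nonneg hb.le (div_nonneg (hv0 y) (by positivity)))
        (fun y => ?_) hI hlam
      have h := ineqA hq ha haq hb hν hK1 hKM (v y / lam) (div_nonneg (hv0 y) hlam0.le)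
      rwa [div_div] at h
    · refine ⟨(lam / K) ^ β, ⟨Real.rpow_pos_of_pos (div_pos hlam0 hK0) _, ?_⟩,
        Real.rpow_le_rpow (by positivity)
          ((div_le_self hlam0.le hK1).trans (le_mul_of_one_le_right hlam0.le hK1)) hb.le⟩
      rw [integral_congr_ae (Filter.Eventually.of_forall fun y =>
        hξeq (lam / K) (div_pos hlam0 hK0) y)]
      have harg : ∀ y, v y / (lam / K) = K * (v y / lam) := by
        intro y; field_simp
      rw [integral_congr_ae (Filter.Eventually.of_forall fun y => by rw [harg y])]
      refine int_of_nonint Q (F := fun y => phiN a ν (v y / lam))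
        (G := fun y => xiN q a β ν (K * (v y / lam)))
        (((measurable_phiN a ν).comp_aemeasurable (hmv.div_const lam)).aestronglyMeasurable)
        (fun y => phiN_nonneg (div_nonneg (hv0 y) hlam0.le))
        (fun y => ineqB2 hq ha haq hb hν hK1 hK2 (v y / lam)
          (div_nonneg (hv0 y) hlam0.le)) hI
  -- reverse transfer
  have hRev : ∀ mu ∈ S1, ∃ lam ∈ S2, lam ≤ mu ^ (1 / β) * K := by
    rintro mu ⟨hmu0, hmu⟩
    set t0 : ℝ := mu ^ (1 / β) with ht0def
    have ht0 : 0 < t0 := Real.rpow_pos_of_pos hmu0 _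
    have hmut : t0 ^ β = mu := by
      rw [ht0def, ← Real.rpow_mul hmu0.le, one_div_mul_cancel hb.ne', Real.rpow_one]
    rw [← hmut] at hmu
    rw [integral_congr_ae (Filter.Eventually.of_forall fun y => hξeq t0 ht0 y)] at hmu
    by_cases hI : Integrable (fun y => xiN q a β ν (v y / t0)) (volume.restrict Q.toSet)
    · refine ⟨t0 * K, ⟨by positivity, ?_⟩, le_rfl⟩
      rw [integral_congr_ae (Filter.Eventually.of_forall fun y => hφeq (t0 * K) y)]
      refine int_le Q (fun y => phiN_nonneg (div_nonneg (hv0 y) (by positivity)))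
        (fun y => ?_) hI hmu
      have h := ineqC hq ha haq hb hν hK1 hK2 (v y / t0) (div_nonneg (hv0 y) ht0.le)
      rwa [div_div] at h
    · refine ⟨t0 / K, ⟨div_pos ht0 hK0, ?_⟩,
        (div_le_self ht0.le hK1).trans (le_mul_of_one_le_right ht0.le hK1)⟩
      rw [integral_congr_ae (Filter.Eventually.of_forall fun y => hφeq (t0 / K) y)]
      have harg : ∀ y, v y / (t0 / K) = K * (v y / t0) := by
        intro y; field_simp
      rw [integral_congr_ae (Filter.Eventually.of_forall fun y => by rw [harg y])]
      refine int_of_nonint Q (F := fun y => xiN q a β ν (v y / t0))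
        (G := fun y => phiN a ν (K * (v y / t0)))
        (((measurable_xiN q a β ν).comp_aemeasurable (hmv.div_const t0)).aestronglyMeasurable)
        (fun y => xiN_nonneg hb.le (div_nonneg (hv0 y) ht0.le))
        (fun y => ?_) hI
      have hky : 0 ≤ K * (v y / t0) := mul_nonneg hK0.le (div_nonneg (hv0 y) ht0.le)
      have h := ineqA hq ha haq hb hν hK1 hKM (K * (v y / t0)) hky
      rw [mul_div_cancel_left₀ _ hK0.ne'] at h
      have h0 := phiN_nonneg (a := a) (ν := ν) (t := K * (v y / t0)) hky
      linarith
  rw [hL1, hL2]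
  constructor
  · by_cases hS2 : S2.Nonempty
    · have step : ∀ lam ∈ S2, sInf S1 ^ (1 / β) / K ≤ lam := by
        intro lam hl
        obtain ⟨mu, hmuS, hle⟩ := hFwd lam hl
        have hlam0 : 0 < lam := hl.1
        have h1 : sInf S1 ≤ (lam * K) ^ β := (csInf_le bddS1 hmuS).trans hle
        have h2 : sInf S1 ^ (1 / β) ≤ lam * K := by
          calc sInf S1 ^ (1 / β) ≤ ((lam * K) ^ β) ^ (1 / β) :=
                Real.rpow_le_rpow hSi1 h1 (by positivity)
            _ = lam * K := by
                rw [← Real.rpow_mul (by positivity), mul_one_div, div_self hb.ne',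
                  Real.rpow_one]
        rw [div_le_iff₀ hK0]
        exact h2
      have h := le_csInf hS2 step
      rw [div_le_iff₀ hK0] at h
      exact h.trans_eq (mul_comm _ _)
    · have hS1 : ¬ S1.Nonempty := by
        rintro ⟨mu, hmu⟩
        obtain ⟨lam, hl, -⟩ := hRev mu hmu
        exact hS2 ⟨lam, hl⟩
      rw [Set.not_nonempty_iff_eq_empty] at hS1 hS2
      rw [hS1, hS2, Real.sInf_empty, Real.zero_rpow (one_div_ne_zero hb.ne'), mul_zero]
  · by_cases hS1 : S1.Nonempty
    · have step : ∀ mu ∈ S1, (sInf S2 / K) ^ β ≤ mu := by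
        intro mu hmuS
        obtain ⟨lam, hl, hle⟩ := hRev mu hmuS
        have hmu0 : 0 < mu := hmuS.1
        have h1 : sInf S2 ≤ mu ^ (1 / β) * K := (csInf_le bddS2 hl).trans hle
        have h2 : sInf S2 / K ≤ mu ^ (1 / β) := by rw [div_le_iff₀ hK0]; exact h1
        calc (sInf S2 / K) ^ β ≤ (mu ^ (1 / β)) ^ β :=
              Real.rpow_le_rpow (by positivity) h2 hb.le
          _ = mu := by
              rw [← Real.rpow_mul hmu0.le, one_div_mul_cancel hb.ne', Real.rpow_one]
      have h := le_csInf hS1 step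
      have h2 : sInf S2 / K ≤ sInf S1 ^ (1 / β) := by
        calc sInf S2 / K = ((sInf S2 / K) ^ β) ^ (1 / β) := by
              rw [← Real.rpow_mul (by positivity), mul_one_div, div_self hb.ne',
                Real.rpow_one]
          _ ≤ sInf S1 ^ (1 / β) := Real.rpow_le_rpow (by positivity) h (by positivity)
      rw [div_le_iff₀ hK0] at h2
      exact h2.trans_eq (mul_comm _ _)
    · have hS2 : ¬ S2.Nonempty := by
        rintro ⟨lam, hl⟩
        obtain ⟨mu, hmu, -⟩ := hFwd lam hl
        exact hS1 ⟨mu, hmu⟩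
      rw [Set.not_nonempty_iff_eq_empty] at hS1 hS2
      rw [hS1, hS2, Real.sInf_empty, Real.zero_rpow (one_div_ne_zero hb.ne'), mul_zero]

end MyAux4

set_option maxHeartbeats 1000000 in
/-- Pointwise control `(M_ξ(v^β))^{1/β} ≲ M_φ v`. -/
theorem maximalOp_xi_pow_le
    (hn : 0 < n) (r δ γ p q r' σ ν β : ℝ)
    (hr : 1 ≤ r) (hδ : 0 ≤ δ) (hγ : 0 < γ) (hγn : γ < (n : ℝ) / r)
    (hp : r < p) (hpn : p < (n : ℝ) / γ)
    (hq : 1 / q = 1 / p - γ / (n : ℝ)) (hr' : 1 / r' = 1 - 1 / r)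
    (hσ : σ = (n : ℝ) * r / ((n : ℝ) - r * γ))
    (hν : ν = (n : ℝ) * δ / ((n : ℝ) - r * γ))
    (hβ : β = (q / σ) * (1 / p + 1 / r')) :
    ∃ C > 0, ∀ v : (Fin n → ℝ) → ℝ, IsWeight v → ∀ x : Fin n → ℝ,
      (maximalOp (fun z => if z ≤ 1 then z ^ (q / β) else z ^ σ * (1 + logPlus z) ^ ν)
          (fun y => v y ^ β) x) ^ (1 / β) ≤
        C * maximalOp (fun z => z ^ (q / p + q / r') * (1 + logPlus z) ^ ν) v x := by
  have hn' : (0:ℝ) < n := by exact_mod_cast hn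
  have hr0 : (0:ℝ) < r := lt_of_lt_of_le one_pos hr
  have hrγ : r * γ < n := by rw [lt_div_iff₀ hr0] at hγn; nlinarith
  have hd : 0 < (n:ℝ) - r * γ := by linarith
  have hσ0 : 0 < σ := by rw [hσ]; positivity
  have hp0 : 0 < p := hr0.trans hp
  have hγp : p * γ < n := by rw [lt_div_iff₀ hγ] at hpn; nlinarith
  have h2 : 0 < 1/p - γ/n := by rw [sub_pos, div_lt_div_iff₀ hn' hp0]; nlinarith
  have hq0 : 0 < q := one_div_pos.mp (by rw [hq]; exact h2)
  have h1r' : 0 ≤ 1 / r' := by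
    rw [hr']
    have : 1/r ≤ 1 := by rw [div_le_one hr0]; exact hr
    linarith
  have hs0 : 0 < 1/p + 1/r' := add_pos_of_pos_of_nonneg (one_div_pos.mpr hp0) h1r'
  have hs1 : 1/p + 1/r' < 1 := by
    rw [hr']
    have : 1/p < 1/r := one_div_lt_one_div_of_lt hr0 hp
    linarith
  have hb0 : 0 < β := by rw [hβ]; positivity
  have hβσ : β * σ = q / p + q / r' := by rw [hβ]; field_simp
  have ha0 : 0 < β * σ := mul_pos hb0 hσ0
  have haq : β * σ ≤ q := by
    have h3 : q / p + q / r' = q * (1/p + 1/r') := by ring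
    rw [hβσ, h3]
    nlinarith
  have hν0 : 0 ≤ ν := by rw [hν]; positivity
  have hm0 : 0 < min β 1 := lt_min hb0 one_pos
  have hmν : 0 < (min β 1) ^ ν := Real.rpow_pos_of_pos hm0 ν
  have hmν1 : (min β 1) ^ ν ≤ 1 := Real.rpow_le_one hm0.le (min_le_right _ _) hν0
  have hMν : 1 ≤ (max β 1) ^ ν := Real.one_le_rpow (le_max_right _ _) hν0
  set X : ℝ := 2 * (max β 1) ^ ν / (min β 1) ^ ν with hX
  have hX0 : 0 < X := by positivity
  have hX2 : 2 ≤ X := by rw [hX, le_div_iff₀ hmν]; nlinarith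
  set K : ℝ := X ^ (β * σ)⁻¹ with hK
  have hKa : K ^ (β * σ) = X := by
    rw [hK, ← Real.rpow_mul hX0.le, inv_mul_cancel₀ ha0.ne', Real.rpow_one]
  have hK1 : 1 ≤ K := Real.one_le_rpow (by linarith) (by positivity)
  have hKM : (max β 1) ^ ν ≤ K ^ (β * σ) := by
    rw [hKa, hX, le_div_iff₀ hmν]; nlinarith
  have hK2 : 2 ≤ K ^ (β * σ) * (min β 1) ^ ν := by
    rw [hKa, hX, div_mul_cancel₀ _ hmν.ne']; nlinarith
  have hK0 : 0 < K := lt_of_lt_of_le one_pos hK1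
  have cancel : ∀ u : ℝ, 0 ≤ u → (u ^ (1/β)) ^ β = u := by
    intro u hu
    rw [← Real.rpow_mul hu, one_div_mul_cancel hb0.ne', Real.rpow_one]
  have cancel' : ∀ u : ℝ, 0 ≤ u → (u ^ β) ^ (1/β) = u := by
    intro u hu
    rw [← Real.rpow_mul hu, mul_one_div, div_self hb0.ne', Real.rpow_one]
  refine ⟨K, hK0, ?_⟩
  intro v hv x
  rw [← hβσ]
  set ξf : ℝ → ℝ := fun z => if z ≤ 1 then z ^ (q / β) else z ^ σ * (1 + logPlus z) ^ ν
    with hxf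
  set φf : ℝ → ℝ := fun z => z ^ (β * σ) * (1 + logPlus z) ^ ν with hpf
  set A : Set ℝ := {s : ℝ | ∃ Q : Cube n, x ∈ Q.toSet ∧ s = luxAvg ξf Q (fun y => v y ^ β)}
    with hAdef
  set B : Set ℝ := {s : ℝ | ∃ Q : Cube n, x ∈ Q.toSet ∧ s = luxAvg φf Q v} with hBdef
  have hEA : maximalOp ξf (fun y => v y ^ β) x = sSup A := rfl
  have hEB : maximalOp φf v x = sSup B := rfl
  rw [hEA, hEB]
  have hQ0 : ∃ Q : Cube n, x ∈ Q.toSet := by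
    refine ⟨⟨x, 1, one_pos⟩, fun i => ⟨le_rfl, ?_⟩⟩
    simp
  obtain ⟨Q0, hxQ0⟩ := hQ0
  have hluxξ0 : ∀ Q : Cube n, 0 ≤ luxAvg ξf Q (fun y => v y ^ β) := fun Q =>
    Real.sInf_nonneg fun y hy => hy.1.le
  have hluxφ0 : ∀ Q : Cube n, 0 ≤ luxAvg φf Q v := fun Q =>
    Real.sInf_nonneg fun y hy => hy.1.le
  have hest := fun Q : Cube n =>
    MyAux4.cube_est (n := n) q σ ν β K hq0 ha0 haq hb0 hν0 hK1 hKM hK2 Q v hv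
  have hA0 : ∀ s ∈ A, 0 ≤ s := by rintro s ⟨Q, -, rfl⟩; exact hluxξ0 Q
  have hB0 : ∀ s ∈ B, 0 ≤ s := by rintro s ⟨Q, -, rfl⟩; exact hluxφ0 Q
  by_cases hB : BddAbove B
  · have hMB0 : 0 ≤ sSup B :=
      Real.sSup_nonneg' ⟨_, ⟨Q0, hxQ0, rfl⟩, hluxφ0 Q0⟩
    have hup : ∀ s ∈ A, s ≤ (K * sSup B) ^ β := by
      rintro s ⟨Q, hxQ, rfl⟩
      have h1 := (hest Q).1
      have hbb : luxAvg φf Q v ≤ sSup B := le_csSup hB ⟨Q, hxQ, rfl⟩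
      have h3 : (luxAvg ξf Q (fun y => v y ^ β)) ^ (1/β) ≤ K * sSup B :=
        h1.trans (mul_le_mul_of_nonneg_left hbb hK0.le)
      calc luxAvg ξf Q (fun y => v y ^ β)
          = ((luxAvg ξf Q (fun y => v y ^ β)) ^ (1/β)) ^ β := (cancel _ (hluxξ0 Q)).symm
        _ ≤ (K * sSup B) ^ β :=
            Real.rpow_le_rpow (Real.rpow_nonneg (hluxξ0 Q) _) h3 hb0.le
    have hsup : sSup A ≤ (K * sSup B) ^ β :=
      Real.sSup_le hup (Real.rpow_nonneg (by positivity) _)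
    calc (sSup A) ^ (1/β) ≤ ((K * sSup B) ^ β) ^ (1/β) :=
          Real.rpow_le_rpow (Real.sSup_nonneg' ⟨_, ⟨Q0, hxQ0, rfl⟩, hluxξ0 Q0⟩)
            hsup (by positivity)
      _ = K * sSup B := cancel' _ (by positivity)
  · have hnA : ¬ BddAbove A := by
      rintro ⟨T, hT⟩
      apply hB
      refine ⟨K * (max T 0) ^ (1/β), ?_⟩
      rintro s ⟨Q, hxQ, rfl⟩
      have h2 := (hest Q).2
      have haT : luxAvg ξf Q (fun y => v y ^ β) ≤ max T 0 :=
        le_trans (hT ⟨Q, hxQ, rfl⟩) (le_max_left _ _)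
      exact h2.trans (mul_le_mul_of_nonneg_left
        (Real.rpow_le_rpow (hluxξ0 Q) haT (by positivity)) hK0.le)
    rw [Real.sSup_of_not_bddAbove hnA, Real.sSup_of_not_bddAbove hB,
      Real.zero_rpow (one_div_ne_zero hb0.ne'), mul_zero]
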